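/- Let n ≥ 4 and let x be an involution of W(D̃_n) with labelled cycle type (m, k_e, k_o, l). Then k_e and k_o are both even; and if at least one of k_e, k_o, l is nonzero, then the conjugacy class of x in W(D̃_n) equals its conjugacy class in W(B̃_n) or its conjugacy class in B̄(B̃_n) (or both). -/

import Mathlib

noncomputable section

open Equiv Finset

/-- Points `±1, …, ±n`, encoded as a sign together with an index. -/
abbrev Pt (n : ℕ) := ℤˣ × Fin n

/-- Negation of a point. -/
def negPt {n : ℕ} (x : Pt n) : Pt n := (-x.1, x.2)

/-- The hyperoctahedral group `H_n` of signed permutations: bijections `σ` of `{±1,…,±n}`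
with `σ(-i) = -σ(i)`. -/
def Hgrp (n : ℕ) : Subgroup (Equiv.Perm (Pt n)) where
  carrier := {σ | ∀ x, σ (negPt x) = negPt (σ x)}
  one_mem' := fun _ => rfl
  mul_mem' := by
    intro σ τ hσ hτ x
    have hσ' : ∀ y, σ (negPt y) = negPt (σ y) := hσ
    have hτ' : ∀ y, τ (negPt y) = negPt (τ y) := hτ
    simp only [Equiv.Perm.mul_apply]
    rw [hτ' x, hσ' (τ x)]
  inv_mem' := by
    intro σ hσ x
    have hσ' : ∀ y, σ (negPt y) = negPt (σ y) := hσ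
    apply σ.injective
    have hinv : ∀ y, σ (σ⁻¹ y) = y := fun y => σ.apply_symm_apply y
    rw [hinv, hσ', hinv]

lemma Hgrp_apply {n : ℕ} {σ : Equiv.Perm (Pt n)} (hσ : σ ∈ Hgrp n) (δ : ℤˣ) (k : Fin n) :
    σ (δ, k) = (δ * (σ (1, k)).1, (σ (1, k)).2) := by
  have hσ' : ∀ y, σ (negPt y) = negPt (σ y) := hσ
  rcases Int.units_eq_one_or δ with h | h <;> subst h
  · simp
  · have h2 := hσ' (1, k)
    simp only [negPt] at h2
    simpa using h2

/-- The (right) action of a signed permutation on integer vectors: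
`(v^σ)_j = ε·v_i` whenever `σ(i) = ε j`. -/
def actV {n : ℕ} (σ : Equiv.Perm (Pt n)) (v : Fin n → ℤ) : Fin n → ℤ :=
  fun j => ((σ (1, j)).1 : ℤ) * v (σ (1, j)).2

lemma actV_add {n : ℕ} (σ : Equiv.Perm (Pt n)) (a b : Fin n → ℤ) :
    actV σ (a + b) = actV σ a + actV σ b := by
  funext j; simp [actV, mul_add]

lemma actV_zero {n : ℕ} (σ : Equiv.Perm (Pt n)) : actV σ 0 = 0 := by
  funext j; simp [actV]

lemma actV_neg {n : ℕ} (σ : Equiv.Perm (Pt n)) (v : Fin n → ℤ) :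
    actV σ (-v) = -actV σ v := by
  funext j; simp [actV]

lemma actV_one {n : ℕ} (v : Fin n → ℤ) : actV 1 v = v := by
  funext j; simp [actV]

lemma actV_mul {n : ℕ} {σ : Equiv.Perm (Pt n)} (hσ : σ ∈ Hgrp n) (τ : Equiv.Perm (Pt n))
    (v : Fin n → ℤ) : actV (σ * τ) v = actV τ (actV σ v) := by
  funext j
  have h := Hgrp_apply hσ (τ (1, j)).1 (τ (1, j)).2
  rw [Prod.mk.eta] at h
  simp only [actV, Equiv.Perm.mul_apply, h]
  push_cast
  ring

/-- The affine Weyl group of type `C̃ₙ`: pairs `(σ, v)` with `σ` a signed permutation and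
`v ∈ ℤⁿ`, with multiplication `(σ,v)(τ,u) = (στ, v^τ + u)`. -/
@[ext] structure WC (n : ℕ) where
  sigma : Hgrp n
  vec : Fin n → ℤ

namespace WC

variable {n : ℕ}

instance : Mul (WC n) :=
  ⟨fun x y => ⟨x.sigma * y.sigma, actV (y.sigma : Equiv.Perm (Pt n)) x.vec + y.vec⟩⟩

instance : One (WC n) := ⟨⟨1, 0⟩⟩

instance : Inv (WC n) :=
  ⟨fun x => ⟨x.sigma⁻¹, -actV ((x.sigma⁻¹ : Hgrp n) : Equiv.Perm (Pt n)) x.vec⟩⟩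

@[simp] lemma mul_sigma (x y : WC n) : (x * y).sigma = x.sigma * y.sigma := rfl
@[simp] lemma mul_vec (x y : WC n) :
    (x * y).vec = actV (y.sigma : Equiv.Perm (Pt n)) x.vec + y.vec := rfl
@[simp] lemma one_sigma : (1 : WC n).sigma = 1 := rfl
@[simp] lemma one_vec : (1 : WC n).vec = 0 := rfl
@[simp] lemma inv_sigma (x : WC n) : (x⁻¹).sigma = x.sigma⁻¹ := rfl
@[simp] lemma inv_vec (x : WC n) :
    (x⁻¹).vec = -actV ((x.sigma⁻¹ : Hgrp n) : Equiv.Perm (Pt n)) x.vec := rfl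

instance : Group (WC n) where
  mul_assoc a b c := by
    refine WC.ext ?_ ?_
    · exact mul_assoc _ _ _
    · show actV (c.sigma : Equiv.Perm (Pt n))
          (actV (b.sigma : Equiv.Perm (Pt n)) a.vec + b.vec) + c.vec
        = actV (((b.sigma * c.sigma : Hgrp n)) : Equiv.Perm (Pt n)) a.vec
          + (actV (c.sigma : Equiv.Perm (Pt n)) b.vec + c.vec)
      rw [actV_add]
      have hc : (((b.sigma * c.sigma : Hgrp n)) : Equiv.Perm (Pt n))
          = (b.sigma : Equiv.Perm (Pt n)) * (c.sigma : Equiv.Perm (Pt n)) := rfl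
      rw [hc, actV_mul b.sigma.2]
      abel
  one_mul a := by
    refine WC.ext (one_mul _) ?_
    show actV (a.sigma : Equiv.Perm (Pt n)) 0 + a.vec = a.vec
    rw [actV_zero, zero_add]
  mul_one a := by
    refine WC.ext (mul_one _) ?_
    show actV ((1 : Hgrp n) : Equiv.Perm (Pt n)) a.vec + 0 = a.vec
    have h1 : ((1 : Hgrp n) : Equiv.Perm (Pt n)) = 1 := rfl
    rw [h1, actV_one, add_zero]
  inv_mul_cancel a := by
    refine WC.ext (inv_mul_cancel _) ?_
    show actV (a.sigma : Equiv.Perm (Pt n))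
        (-actV ((a.sigma⁻¹ : Hgrp n) : Equiv.Perm (Pt n)) a.vec) + a.vec = 0
    rw [actV_neg, ← actV_mul (a.sigma⁻¹ : Hgrp n).2]
    have h1 : ((a.sigma⁻¹ : Hgrp n) : Equiv.Perm (Pt n)) * (a.sigma : Equiv.Perm (Pt n)) = 1 := by
      rw [← Subgroup.coe_mul, inv_mul_cancel, Subgroup.coe_one]
    rw [h1, actV_one, neg_add_cancel]

end WC

/-- `Σw`: the coordinate sum of the translation part. -/
def sumV {n : ℕ} (x : WC n) : ℤ := ∑ i, x.vec i

/-- `minus(w)`: the number of `i ∈ {1,…,n}` with `σ(i) < 0`. -/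
def minusCard {n : ℕ} (x : WC n) : ℕ :=
  (Finset.univ.filter fun i : Fin n => ((x.sigma : Equiv.Perm (Pt n)) (1, i)).1 = -1).card
lemma permOf_bij {n : ℕ} (σ : Hgrp n) :
    Function.Bijective (fun i : Fin n => ((σ : Equiv.Perm (Pt n)) (1, i)).2) := by
  rw [Fintype.bijective_iff_injective_and_card]
  refine ⟨?_, rfl⟩
  intro i j hij
  simp only at hij
  have hmem : ∀ y, (σ : Equiv.Perm (Pt n)) (negPt y) = negPt ((σ : Equiv.Perm (Pt n)) y) := σ.2
  by_cases h1 : ((σ : Equiv.Perm (Pt n)) (1, i)).1 = ((σ : Equiv.Perm (Pt n)) (1, j)).1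
  · have heq : (σ : Equiv.Perm (Pt n)) (1, i) = (σ : Equiv.Perm (Pt n)) (1, j) :=
      Prod.ext h1 hij
    have h2 := (σ : Equiv.Perm (Pt n)).injective heq
    exact congrArg Prod.snd h2
  · exfalso
    have hfst : ((σ : Equiv.Perm (Pt n)) (1, i)).1 = -((σ : Equiv.Perm (Pt n)) (1, j)).1 := by
      rcases Int.units_eq_one_or ((σ : Equiv.Perm (Pt n)) (1, i)).1 with ha | ha <;>
        rcases Int.units_eq_one_or ((σ : Equiv.Perm (Pt n)) (1, j)).1 with hb | hb <;>
        first
          | exact absurd (ha.trans hb.symm) h1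
          | simp [ha, hb]
    have hne : (σ : Equiv.Perm (Pt n)) (1, i) = negPt ((σ : Equiv.Perm (Pt n)) (1, j)) :=
      Prod.ext hfst hij
    rw [← hmem (1, j)] at hne
    have h3 := (σ : Equiv.Perm (Pt n)).injective hne
    have h4 := congrArg Prod.fst h3
    simp only [negPt] at h4
    exact absurd h4 (by decide)

/-- The underlying (unsigned) permutation of `{1,…,n}` induced by a signed permutation. -/
def permOf {n : ℕ} (σ : Hgrp n) : Equiv.Perm (Fin n) :=
  Equiv.ofBijective _ (permOf_bij σ)

@[simp] lemma permOf_apply {n : ℕ} (σ : Hgrp n) (i : Fin n) :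
    permOf σ i = ((σ : Equiv.Perm (Pt n)) (1, i)).2 := rfl

lemma unitsCast_zmod2 (ε : ℤˣ) : (((ε : ℤ) : ZMod 2)) = 1 := by
  rcases Int.units_eq_one_or ε with h | h <;> subst h <;> decide

lemma sumV_mul {n : ℕ} (x y : WC n) :
    ((sumV (x * y) : ℤ) : ZMod 2) = ((sumV x : ℤ) : ZMod 2) + ((sumV y : ℤ) : ZMod 2) := by
  have key : ∀ (σ : Hgrp n) (v : Fin n → ℤ),
      (∑ i, ((actV (σ : Equiv.Perm (Pt n)) v i : ℤ) : ZMod 2)) = ∑ i, ((v i : ℤ) : ZMod 2) := by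
    intro σ v
    have hterm : ∀ i, ((actV (σ : Equiv.Perm (Pt n)) v i : ℤ) : ZMod 2)
        = ((v (permOf σ i) : ℤ) : ZMod 2) := by
      intro i
      show ((((((σ : Equiv.Perm (Pt n)) (1, i)).1 : ℤ)) * v (((σ : Equiv.Perm (Pt n)) (1, i)).2) : ℤ) : ZMod 2) = _
      push_cast
      rw [unitsCast_zmod2, one_mul]
      rfl
    rw [Finset.sum_congr rfl (fun i _ => hterm i)]
    exact Equiv.sum_comp (permOf σ) (fun i => ((v i : ℤ) : ZMod 2))
  have hvec : (x * y).vec = actV (y.sigma : Equiv.Perm (Pt n)) x.vec + y.vec := rfl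
  unfold sumV
  rw [hvec]
  have hsplit : (∑ i, (actV (y.sigma : Equiv.Perm (Pt n)) x.vec + y.vec) i)
      = (∑ i, actV (y.sigma : Equiv.Perm (Pt n)) x.vec i) + ∑ i, y.vec i := by
    rw [← Finset.sum_add_distrib]; rfl
  rw [hsplit]
  push_cast
  rw [key y.sigma x.vec]

lemma minusCard_one {n : ℕ} : minusCard (1 : WC n) = 0 := by
  unfold minusCard
  rw [Finset.card_eq_zero, Finset.filter_eq_empty_iff]
  intro i _
  show ¬ (((1 : Hgrp n) : Equiv.Perm (Pt n)) (1, i)).1 = -1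
  simp only [OneMemClass.coe_one, Equiv.Perm.one_apply]
  decide

lemma ite_units_mul (u w : ℤˣ) :
    ((if u * w = -1 then (1 : ZMod 2) else 0)) =
      (if u = -1 then (1 : ZMod 2) else 0) + (if w = -1 then (1 : ZMod 2) else 0) := by
  rcases Int.units_eq_one_or u with h | h <;> rcases Int.units_eq_one_or w with h' | h' <;>
    subst h <;> subst h' <;> decide

lemma minusCard_mul {n : ℕ} (x y : WC n) :
    ((minusCard (x * y) : ℕ) : ZMod 2) = (minusCard x : ZMod 2) + (minusCard y : ZMod 2) := by
  have hσ : ∀ i : Fin n, ((x * y).sigma : Equiv.Perm (Pt n)) (1, i)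
      = (x.sigma : Equiv.Perm (Pt n)) ((y.sigma : Equiv.Perm (Pt n)) (1, i)) := fun i => rfl
  unfold minusCard
  rw [Finset.card_filter, Finset.card_filter, Finset.card_filter]
  push_cast
  have step : ∀ i : Fin n,
      ((if (((x * y).sigma : Equiv.Perm (Pt n)) (1, i)).1 = -1 then (1 : ZMod 2) else 0))
      = (if ((y.sigma : Equiv.Perm (Pt n)) (1, i)).1 = -1 then (1 : ZMod 2) else 0)
        + (if ((x.sigma : Equiv.Perm (Pt n)) (1, permOf y.sigma i)).1 = -1
            then (1 : ZMod 2) else 0) := by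
    intro i
    rw [hσ i]
    have h := Hgrp_apply x.sigma.2 ((y.sigma : Equiv.Perm (Pt n)) (1, i)).1
      ((y.sigma : Equiv.Perm (Pt n)) (1, i)).2
    rw [Prod.mk.eta] at h
    rw [h]
    exact ite_units_mul _ _
  calc (∑ i : Fin n, if (((x * y).sigma : Equiv.Perm (Pt n)) (1, i)).1 = -1
          then (1 : ZMod 2) else 0)
      = ∑ i : Fin n, ((if ((y.sigma : Equiv.Perm (Pt n)) (1, i)).1 = -1 then (1 : ZMod 2) else 0)
        + (if ((x.sigma : Equiv.Perm (Pt n)) (1, permOf y.sigma i)).1 = -1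
            then (1 : ZMod 2) else 0)) := Finset.sum_congr rfl (fun i _ => step i)
    _ = (∑ i : Fin n, if ((y.sigma : Equiv.Perm (Pt n)) (1, i)).1 = -1 then (1 : ZMod 2) else 0)
        + ∑ i : Fin n, (if ((x.sigma : Equiv.Perm (Pt n)) (1, permOf y.sigma i)).1 = -1
            then (1 : ZMod 2) else 0) := Finset.sum_add_distrib
    _ = (∑ i : Fin n, if ((x.sigma : Equiv.Perm (Pt n)) (1, i)).1 = -1 then (1 : ZMod 2) else 0)
        + ∑ i : Fin n, (if ((y.sigma : Equiv.Perm (Pt n)) (1, i)).1 = -1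
            then (1 : ZMod 2) else 0) := by
          rw [add_comm]
          congr 1
          exact Equiv.sum_comp (permOf y.sigma)
            (fun k => if ((x.sigma : Equiv.Perm (Pt n)) (1, k)).1 = -1 then (1 : ZMod 2) else 0)
lemma even_int_iff_zmod {a : ℤ} : Even a ↔ ((a : ZMod 2) = 0) := by
  rw [ZMod.intCast_zmod_eq_zero_iff_dvd a 2, Int.even_iff]
  push_cast
  omega

lemma sumV_one {n : ℕ} : sumV (1 : WC n) = 0 := by simp [sumV]

/-- The affine Weyl group of type `B̃ₙ`: the elements `w` of `W(C̃ₙ)` with `Σw` even. -/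
def WB (n : ℕ) : Subgroup (WC n) where
  carrier := {w | Even (sumV w)}
  one_mem' := by
    show Even (sumV (1 : WC n))
    rw [sumV_one]
    exact Even.zero
  mul_mem' := by
    intro a b ha hb
    have ha' : ((sumV a : ℤ) : ZMod 2) = 0 := even_int_iff_zmod.mp ha
    have hb' : ((sumV b : ℤ) : ZMod 2) = 0 := even_int_iff_zmod.mp hb
    refine even_int_iff_zmod.mpr ?_
    rw [sumV_mul, ha', hb', add_zero]
  inv_mem' := by
    intro a ha
    have ha' : ((sumV a : ℤ) : ZMod 2) = 0 := even_int_iff_zmod.mp ha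
    refine even_int_iff_zmod.mpr ?_
    have h1 := sumV_mul a⁻¹ a
    rw [inv_mul_cancel, sumV_one, ha', add_zero] at h1
    simpa using h1.symm

lemma intModEq_two_iff {a b : ℤ} : a ≡ b [ZMOD 2] ↔ ((a : ZMod 2) = (b : ZMod 2)) :=
  (ZMod.intCast_eq_intCast_iff a b 2).symm

/-- The second copy `B̄(B̃ₙ)` of the affine Weyl group of type `B̃ₙ` inside `W(C̃ₙ)`:
elements with `Σw ≡ minus(w) (mod 2)`. -/
def Bbar (n : ℕ) : Subgroup (WC n) where
  carrier := {w | sumV w ≡ (minusCard w : ℤ) [ZMOD 2]}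
  one_mem' := by
    show sumV (1 : WC n) ≡ ((minusCard (1 : WC n) : ℤ)) [ZMOD 2]
    rw [sumV_one, minusCard_one]
    rfl
  mul_mem' := by
    intro a b ha hb
    have ha' := intModEq_two_iff.mp ha
    have hb' := intModEq_two_iff.mp hb
    refine intModEq_two_iff.mpr ?_
    rw [sumV_mul, ha', hb']
    push_cast at ha' hb' ⊢
    rw [minusCard_mul]
  inv_mem' := by
    intro a ha
    have ha' := intModEq_two_iff.mp ha
    refine intModEq_two_iff.mpr ?_
    have h1 := sumV_mul a⁻¹ a
    have h2 := minusCard_mul a⁻¹ a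
    rw [inv_mul_cancel, sumV_one] at h1
    rw [inv_mul_cancel, minusCard_one] at h2
    push_cast at ha' h1 h2 ⊢
    linear_combination h1.symm - h2.symm - ha'

/-- The affine Weyl group of type `D̃ₙ`, as the intersection of the two `B̃ₙ`'s. -/
def WD (n : ℕ) : Subgroup (WC n) := WB n ⊓ Bbar n

instance : DecidablePred (fun k : ℤ => Even k) := fun _ => decidable_of_iff _ Int.even_iff.symm
instance : DecidablePred (fun k : ℤ => Odd k) := fun _ => decidable_of_iff _ Int.odd_iff.symm

/-- The labelled cycle type `(m, k_e, k_o, l)` of an element of `W(C̃ₙ)` (intended for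
involutions): `m` is the number of 2-cycles of `σ`, `k_e` (resp. `k_o`) is the number of
`i` with `σ(i) = -i` whose label `v_i` is even (resp. odd), and `l` is the number of fixed
points of `σ`. -/
def lct {n : ℕ} (x : WC n) : ℕ × ℕ × ℕ × ℕ :=
  ((Finset.univ.filter fun i : Fin n => ((x.sigma : Equiv.Perm (Pt n)) (1, i)).2 ≠ i).card / 2,
   (Finset.univ.filter fun i : Fin n =>
      (x.sigma : Equiv.Perm (Pt n)) (1, i) = (-1, i) ∧ Even (x.vec i)).card,
   (Finset.univ.filter fun i : Fin n =>
      (x.sigma : Equiv.Perm (Pt n)) (1, i) = (-1, i) ∧ Odd (x.vec i)).card,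
   (Finset.univ.filter fun i : Fin n => (x.sigma : Equiv.Perm (Pt n)) (1, i) = (1, i)).card)

/-- `f(x)`: twice the sum of the labels over one chosen entry of each 2-cycle (we choose the
entry with the smaller index), plus the sum of the labels over the negative 1-cycles.  Only
its residue modulo 4 is ever used, and for involutions that residue does not depend on the
choice of entries. -/
def fval {n : ℕ} (x : WC n) : ℤ :=
  2 * (∑ i ∈ Finset.univ.filter
        (fun i : Fin n => i < ((x.sigma : Equiv.Perm (Pt n)) (1, i)).2), x.vec i)
  + ∑ i ∈ Finset.univ.filter
      (fun i : Fin n => (x.sigma : Equiv.Perm (Pt n)) (1, i) = (-1, i)), x.vec i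

/-- The commuting graph on a set `X` of elements of a group: vertices are the elements
of `X`, and distinct vertices are adjacent exactly when they commute.  When `X` is a
conjugacy class of involutions this is the commuting involution graph `C(G,X)`. -/
def commGraph {M : Type*} [Group M] (X : Set M) : SimpleGraph X where
  Adj a b := a ≠ b ∧ (a : M) * (b : M) = (b : M) * (a : M)
  symm := ⟨fun a b h => ⟨h.1.symm, h.2.symm⟩⟩
  loopless := ⟨fun a h => h.1 rfl⟩

/-- The conjugacy class of `x` under conjugation by a subgroup `G`. -/
def ConjugacyClassOf {M : Type*} [Group M] (G : Subgroup M) (x : M) : Set M :=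
  {y | ∃ g ∈ G, g⁻¹ * x * g = y}

/-- `X` is a conjugacy class of involutions of the subgroup `G`. -/
def IsInvolutionConjClass {M : Type*} [Group M] (G : Subgroup M) (X : Set M) : Prop :=
  ∃ x ∈ G, orderOf x = 2 ∧ X = ConjugacyClassOf G x

/-- Sign change at the single coordinate `k`. -/
def negAt {n : ℕ} (k : Fin n) : Equiv.Perm (Pt n) :=
  Function.Involutive.toPerm (fun p => if p.2 = k then (-p.1, p.2) else p) (by
    intro p
    by_cases h : p.2 = k <;> simp [h, Prod.ext_iff])

lemma negAt_mem {n : ℕ} (k : Fin n) : negAt k ∈ Hgrp n := by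
  intro p
  show (if (negPt p).2 = k then (-(negPt p).1, (negPt p).2) else negPt p)
      = negPt (if p.2 = k then (-p.1, p.2) else p)
  by_cases h : p.2 = k <;> simp [negPt, h]

/-- The positive transposition of the coordinates `a` and `b`. -/
def swapPos {n : ℕ} (a b : Fin n) : Equiv.Perm (Pt n) :=
  Equiv.prodCongr (Equiv.refl ℤˣ) (Equiv.swap a b)

lemma swapPos_mem {n : ℕ} (a b : Fin n) : swapPos a b ∈ Hgrp n := fun _ => rfl

/-- The negative transposition of the coordinates `a` and `b` (for `a ≠ b` it sends
`a ↦ -b` and `b ↦ -a`). -/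
def negSwap {n : ℕ} (a b : Fin n) : Equiv.Perm (Pt n) := negAt b * negAt a * swapPos a b

lemma negSwap_mem {n : ℕ} (a b : Fin n) : negSwap a b ∈ Hgrp n :=
  mul_mem (mul_mem (negAt_mem b) (negAt_mem a)) (swapPos_mem a b)

/-- Constructor for elements of `W(C̃ₙ)`. -/
def mkW {n : ℕ} (σ : Equiv.Perm (Pt n)) (h : σ ∈ Hgrp n) (v : Fin n → ℤ) : WC n := ⟨⟨σ, h⟩, v⟩

/-- The simple reflection `r₁ = (σ, 0)` with `σ(1) = -1` (take `k = 0`); more generally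
`(σ, 0)` with `σ(k) = -k`. -/
def rFirstGen (n : ℕ) (k : Fin n) : WC n := mkW (negAt k) (negAt_mem k) 0

/-- The simple reflections `rᵢ = (σ, 0)`, `2 ≤ i ≤ n`, where `σ` exchanges `a` and `b`
positively (take `a, b` adjacent). -/
def swapGen (n : ℕ) (a b : Fin n) : WC n := mkW (swapPos a b) (swapPos_mem a b) 0

/-- The simple reflection `r_{n+1} = (σ, eₙ)` with `σ(n) = -n` (take `k = n-1`). -/
def rLastGen (n : ℕ) (k : Fin n) : WC n := mkW (negAt k) (negAt_mem k) (Pi.single k 1)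

/-- The reflections `s = (σ, e_{n-1} + eₙ)` (take `a = n-2`, `b = n-1`) and
`t = (σ, e₁ + e₂)` (take `a = 0`, `b = 1`), where `σ(a) = -b`, `σ(b) = -a`. -/
def negSwapGen (n : ℕ) (a b : Fin n) : WC n :=
  mkW (negSwap a b) (negSwap_mem a b) (Pi.single a 1 + Pi.single b 1)

/-- The projection `π : W(C̃ₙ) → Hₙ`, `(σ, v) ↦ σ`. -/
def projHom (n : ℕ) : WC n →* Equiv.Perm (Pt n) where
  toFun x := (x.sigma : Equiv.Perm (Pt n))
  map_one' := rfl
  map_mul' _ _ := rfl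

/-- The action of a signed permutation on real vectors. -/
def actR {n : ℕ} (σ : Equiv.Perm (Pt n)) (u : Fin n → ℝ) : Fin n → ℝ :=
  fun j => (((σ (1, j)).1 : ℤ) : ℝ) * u (σ (1, j)).2

/-- The affine action of `w = (σ,v) ∈ W(C̃ₙ)` on `ℝⁿ`: `u ↦ u^σ + v`. -/
def affAct {n : ℕ} (x : WC n) : (Fin n → ℝ) → (Fin n → ℝ) :=
  fun u => actR (x.sigma : Equiv.Perm (Pt n)) u + fun i => ((x.vec i : ℤ) : ℝ)

/-- The affine involution `φ` of `ℝⁿ` with `φ(u)ᵢ = 1/2 - u_{n+1-i}`. -/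
def phiR (n : ℕ) : (Fin n → ℝ) → (Fin n → ℝ) := fun u i => 1 / 2 - u i.rev


section AuxProof

variable {n : ℕ}

lemma zmod2_cases : ∀ a : ZMod 2, a = 0 ∨ a = 1 := by decide

lemma zmod2_add_self (a : ZMod 2) : a + a = 0 := by revert a; decide

lemma zmod2_ne_zero {a : ZMod 2} (h : a ≠ 0) : a = 1 := by revert a h; decide

lemma odd_int_zmod {a : ℤ} (h : Odd a) : ((a : ZMod 2) = 1) := by
  apply zmod2_ne_zero
  intro h0
  exact (Int.not_even_iff_odd.mpr h) (even_int_iff_zmod.mpr h0)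

lemma int_zmod2_ite (a : ℤ) : ((a : ZMod 2)) = if Odd a then 1 else 0 := by
  by_cases h : Odd a
  · rw [if_pos h, odd_int_zmod h]
  · rw [if_neg h, ← even_int_iff_zmod]
    exact Int.not_odd_iff_even.mp h

lemma nat_even_zmod2 {k : ℕ} (h : ((k : ZMod 2)) = 0) : Even k := by
  have := (ZMod.natCast_eq_zero_iff k 2).mp h
  exact (even_iff_two_dvd).mpr this

/-- The parity function `Σ mod 2`. -/
def psiHom (n : ℕ) : WC n → ZMod 2 := fun w => ((sumV w : ℤ) : ZMod 2)

/-- The parity function `(Σ + minus) mod 2`. -/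
def phiHom (n : ℕ) : WC n → ZMod 2 :=
  fun w => ((sumV w : ℤ) : ZMod 2) + ((minusCard w : ℕ) : ZMod 2)

lemma psiHom_mul (x y : WC n) : psiHom n (x * y) = psiHom n x + psiHom n y := sumV_mul x y

lemma phiHom_mul (x y : WC n) : phiHom n (x * y) = phiHom n x + phiHom n y := by
  unfold phiHom
  rw [sumV_mul, minusCard_mul]; push_cast; ring

lemma mem_WB_iff (w : WC n) : w ∈ WB n ↔ psiHom n w = 0 := even_int_iff_zmod

lemma mem_Bbar_iff (w : WC n) : w ∈ Bbar n ↔ phiHom n w = 0 := by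
  show (sumV w ≡ (minusCard w : ℤ) [ZMOD 2]) ↔ _
  rw [intModEq_two_iff]
  show _ ↔ ((sumV w : ℤ) : ZMod 2) + ((minusCard w : ℕ) : ZMod 2) = 0
  have hc : (((minusCard w : ℤ) : ZMod 2)) = ((minusCard w : ℕ) : ZMod 2) := by push_cast; rfl
  rw [hc]
  constructor
  · intro h; rw [h]; exact zmod2_add_self _
  · intro h
    have := zmod2_cases ((sumV w : ℤ) : ZMod 2)
    have := zmod2_cases ((minusCard w : ℕ) : ZMod 2)
    rcases ‹((sumV w : ℤ) : ZMod 2) = 0 ∨ _› with h1 | h1 <;>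
      rcases ‹((minusCard w : ℕ) : ZMod 2) = 0 ∨ _› with h2 | h2 <;>
      rw [h1, h2] <;> rw [h1, h2] at h <;> first | rfl | exact absurd h (by decide)

lemma mem_WD_iff (w : WC n) : w ∈ WD n ↔ w ∈ WB n ∧ w ∈ Bbar n := Subgroup.mem_inf

/-- Generic lemma: if `g ∈ G` commutes with `x` and `f g = 1` where `D = G ∩ ker f`,
then the `D`-class of `x` equals the `G`-class of `x`. -/
lemma class_eq_of_comm {M : Type*} [Group M] (G D : Subgroup M) (f : M → ZMod 2)
    (hmul : ∀ a b, f (a * b) = f a + f b)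
    (hD : ∀ w, w ∈ D ↔ w ∈ G ∧ f w = 0) (x g : M)
    (hcomm : g * x = x * g) (hgG : g ∈ G) (hgf : f g = 1) :
    ConjugacyClassOf D x = ConjugacyClassOf G x := by
  have hgx : g⁻¹ * x * g = x := by
    rw [mul_assoc, ← hcomm, ← mul_assoc, inv_mul_cancel, one_mul]
  ext y
  constructor
  · rintro ⟨h, hh, rfl⟩
    exact ⟨h, ((hD h).mp hh).1, rfl⟩
  · rintro ⟨h, hhG, rfl⟩
    by_cases hf : f h = 0
    · exact ⟨h, (hD h).mpr ⟨hhG, hf⟩, rfl⟩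
    · have hf1 : f h = 1 := zmod2_ne_zero hf
      refine ⟨g * h, (hD _).mpr ⟨G.mul_mem hgG hhG, by rw [hmul, hgf, hf1]; decide⟩, ?_⟩
      have : (g * h)⁻¹ * x * (g * h) = h⁻¹ * (g⁻¹ * x * g) * h := by group
      rw [this, hgx]

/-- From `x² = 1`: the permutation squares to the identity. -/
lemma sigma_sq (x : WC n) (hx2 : x * x = 1) (p : Pt n) :
    (x.sigma : Equiv.Perm (Pt n)) ((x.sigma : Equiv.Perm (Pt n)) p) = p := by
  have h : x.sigma * x.sigma = 1 := congrArg WC.sigma hx2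
  have h2 : ((x.sigma : Equiv.Perm (Pt n)) * (x.sigma : Equiv.Perm (Pt n))) = 1 := by
    rw [← Subgroup.coe_mul, h]; rfl
  have := congrFun (congrArg (fun e : Equiv.Perm (Pt n) => (e : Pt n → Pt n)) h2) p
  simpa using this

/-- From `x² = 1`: the vector relation `v^σ = -v`. -/
lemma vec_rel (x : WC n) (hx2 : x * x = 1) (j : Fin n) :
    (((x.sigma : Equiv.Perm (Pt n)) (1, j)).1 : ℤ)
      * x.vec ((x.sigma : Equiv.Perm (Pt n)) (1, j)).2 = - x.vec j := by
  have h : actV (x.sigma : Equiv.Perm (Pt n)) x.vec + x.vec = 0 := congrArg WC.vec hx2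
  have := congrFun h j
  simp only [Pi.add_apply, Pi.zero_apply, actV] at this
  linarith

lemma pair_facts (x : WC n) (hx2 : x * x = 1) (i : Fin n) :
    ((x.sigma : Equiv.Perm (Pt n)) (1, ((x.sigma : Equiv.Perm (Pt n)) (1, i)).2)).2 = i ∧
    ((x.sigma : Equiv.Perm (Pt n)) (1, ((x.sigma : Equiv.Perm (Pt n)) (1, i)).2)).1
      = ((x.sigma : Equiv.Perm (Pt n)) (1, i)).1 := by
  set S : Equiv.Perm (Pt n) := (x.sigma : Equiv.Perm (Pt n)) with hS
  have hsq := sigma_sq x hx2 (1, i)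
  have happ := Hgrp_apply x.sigma.2 (S (1, i)).1 (S (1, i)).2
  rw [Prod.mk.eta] at happ
  rw [← hS] at happ hsq
  rw [happ] at hsq
  have h1 : (S (1, i)).1 * (S (1, (S (1, i)).2)).1 = 1 := congrArg Prod.fst hsq
  have h2 : (S (1, (S (1, i)).2)).2 = i := congrArg Prod.snd hsq
  refine ⟨h2, ?_⟩
  have := congrArg (fun u => (S (1, i)).1 * u) h1
  simpa [← mul_assoc, Int.units_mul_self] using this

lemma pi_inj (x : WC n) {a b : Fin n}
    (h : ((x.sigma : Equiv.Perm (Pt n)) (1, a)).2 = ((x.sigma : Equiv.Perm (Pt n)) (1, b)).2) :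
    a = b := by
  have := (permOf x.sigma).injective (a₁ := a) (a₂ := b) (by rw [permOf_apply, permOf_apply, h])
  exact this

lemma fixed_vec_zero (x : WC n) (hx2 : x * x = 1) (i : Fin n)
    (h : (x.sigma : Equiv.Perm (Pt n)) (1, i) = (1, i)) : x.vec i = 0 := by
  have := vec_rel x hx2 i
  rw [h] at this
  simp at this
  linarith

/-- mod 2, `v (π i) = v i`. -/
lemma vec_pair_zmod (x : WC n) (hx2 : x * x = 1) (i : Fin n) :
    ((x.vec ((x.sigma : Equiv.Perm (Pt n)) (1, i)).2 : ℤ) : ZMod 2) = ((x.vec i : ℤ) : ZMod 2) := by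
  have h := vec_rel x hx2 i
  have := congrArg (fun a : ℤ => ((a : ZMod 2))) h
  simp only [Int.cast_mul, Int.cast_neg] at this
  rw [unitsCast_zmod2, one_mul] at this
  have hneg : ∀ a : ZMod 2, -a = a := by decide
  rw [this, hneg]
 
lemma claimA (x : WC n) (hx2 : x * x = 1) :
    ((minusCard x : ℕ) : ZMod 2) =
      (((Finset.univ.filter fun i : Fin n =>
          (x.sigma : Equiv.Perm (Pt n)) (1, i) = (-1, i) ∧ Even (x.vec i)).card : ℕ) : ZMod 2)
      + (((Finset.univ.filter fun i : Fin n =>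
          (x.sigma : Equiv.Perm (Pt n)) (1, i) = (-1, i) ∧ Odd (x.vec i)).card : ℕ) : ZMod 2) := by
  classical
  have hsplit := Finset.card_filter_add_card_filter_not
    (s := Finset.univ.filter fun i : Fin n => ((x.sigma : Equiv.Perm (Pt n)) (1, i)).1 = -1)
    (p := fun i => ((x.sigma : Equiv.Perm (Pt n)) (1, i)).2 = i)
  rw [Finset.filter_filter, Finset.filter_filter] at hsplit
  have hmc : minusCard x
      = (Finset.univ.filter fun i : Fin n =>
          ((x.sigma : Equiv.Perm (Pt n)) (1, i)).1 = -1).card := rfl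
  have hA : (((Finset.univ.filter fun i : Fin n =>
      ((x.sigma : Equiv.Perm (Pt n)) (1, i)).1 = -1
        ∧ ¬ ((x.sigma : Equiv.Perm (Pt n)) (1, i)).2 = i).card : ℕ) : ZMod 2) = 0 := by
    rw [Finset.card_eq_sum_ones, Nat.cast_sum]
    simp only [Nat.cast_one]
    refine Finset.sum_involution
      (fun a _ => ((x.sigma : Equiv.Perm (Pt n)) (1, a)).2) ?_ ?_ ?_ ?_
    · intro a _; decide
    · intro a ha _
      exact (Finset.mem_filter.mp ha).2.2
    · intro a ha
      rcases Finset.mem_filter.mp ha with ⟨-, h1, h2⟩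
      refine Finset.mem_filter.mpr ⟨Finset.mem_univ _, ?_, ?_⟩
      · rw [(pair_facts x hx2 a).2]; exact h1
      · rw [(pair_facts x hx2 a).1]; exact fun h => h2 h.symm
    · intro a _; exact (pair_facts x hx2 a).1
  have hfix : (Finset.univ.filter fun i : Fin n =>
        ((x.sigma : Equiv.Perm (Pt n)) (1, i)).1 = -1
          ∧ ((x.sigma : Equiv.Perm (Pt n)) (1, i)).2 = i)
      = Finset.univ.filter fun i : Fin n =>
          (x.sigma : Equiv.Perm (Pt n)) (1, i) = (-1, i) := by
    apply Finset.filter_congr; intro i _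
    constructor
    · rintro ⟨h1, h2⟩; exact Prod.ext h1 h2
    · intro h; exact ⟨congrArg Prod.fst h, congrArg Prod.snd h⟩
  have hek := Finset.card_filter_add_card_filter_not
    (s := Finset.univ.filter fun i : Fin n => (x.sigma : Equiv.Perm (Pt n)) (1, i) = (-1, i))
    (p := fun i => Even (x.vec i))
  rw [Finset.filter_filter, Finset.filter_filter] at hek
  have hodd : (Finset.univ.filter fun i : Fin n =>
        (x.sigma : Equiv.Perm (Pt n)) (1, i) = (-1, i) ∧ ¬ Even (x.vec i))
      = Finset.univ.filter fun i : Fin n =>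
          (x.sigma : Equiv.Perm (Pt n)) (1, i) = (-1, i) ∧ Odd (x.vec i) := by
    apply Finset.filter_congr; intro i _
    simp [Int.not_even_iff_odd]
  rw [hmc, ← hsplit, Nat.cast_add, hfix, hA, add_zero, ← hek, Nat.cast_add, hodd]

lemma claimB (x : WC n) (hx2 : x * x = 1) :
    ((sumV x : ℤ) : ZMod 2) =
      (((Finset.univ.filter fun i : Fin n =>
          (x.sigma : Equiv.Perm (Pt n)) (1, i) = (-1, i) ∧ Odd (x.vec i)).card : ℕ) : ZMod 2) := by
  classical
  have h0 : ((sumV x : ℤ) : ZMod 2) = ∑ i : Fin n, ((x.vec i : ℤ) : ZMod 2) := by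
    unfold sumV; push_cast; rfl
  rw [h0]
  have hsplit := Finset.sum_filter_add_sum_filter_not Finset.univ
    (fun i : Fin n => ((x.sigma : Equiv.Perm (Pt n)) (1, i)).2 = i)
    (fun i => ((x.vec i : ℤ) : ZMod 2))
  rw [← hsplit]
  have hnf : ∑ i ∈ Finset.univ.filter
      (fun i : Fin n => ¬ ((x.sigma : Equiv.Perm (Pt n)) (1, i)).2 = i),
      ((x.vec i : ℤ) : ZMod 2) = 0 := by
    refine Finset.sum_involution
      (fun a _ => ((x.sigma : Equiv.Perm (Pt n)) (1, a)).2) ?_ ?_ ?_ ?_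
    · intro a _
      rw [vec_pair_zmod x hx2 a]
      exact zmod2_add_self _
    · intro a ha _; exact (Finset.mem_filter.mp ha).2
    · intro a ha
      refine Finset.mem_filter.mpr ⟨Finset.mem_univ _, ?_⟩
      rw [(pair_facts x hx2 a).1]
      exact fun h => (Finset.mem_filter.mp ha).2 h.symm
    · intro a _; exact (pair_facts x hx2 a).1
  rw [hnf, add_zero]
  have hsub : ∑ i ∈ Finset.univ.filter
      (fun i : Fin n => ((x.sigma : Equiv.Perm (Pt n)) (1, i)).2 = i)
      |>.filter (fun i => ((x.sigma : Equiv.Perm (Pt n)) (1, i)).1 = -1),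
      ((x.vec i : ℤ) : ZMod 2)
      = ∑ i ∈ Finset.univ.filter
          (fun i : Fin n => ((x.sigma : Equiv.Perm (Pt n)) (1, i)).2 = i),
          ((x.vec i : ℤ) : ZMod 2) := by
    apply Finset.sum_filter_of_ne
    intro i hi hv
    rcases Int.units_eq_one_or ((x.sigma : Equiv.Perm (Pt n)) (1, i)).1 with h1 | h1
    · exfalso
      apply hv
      have hfix : (x.sigma : Equiv.Perm (Pt n)) (1, i) = (1, i) :=
        Prod.ext h1 (Finset.mem_filter.mp hi).2
      rw [fixed_vec_zero x hx2 i hfix]; rfl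
    · exact h1
  rw [← hsub, Finset.filter_filter]
  have hset : (Finset.univ.filter fun i : Fin n =>
        ((x.sigma : Equiv.Perm (Pt n)) (1, i)).2 = i
          ∧ ((x.sigma : Equiv.Perm (Pt n)) (1, i)).1 = -1)
      = Finset.univ.filter fun i : Fin n =>
          (x.sigma : Equiv.Perm (Pt n)) (1, i) = (-1, i) := by
    apply Finset.filter_congr; intro i _
    constructor
    · rintro ⟨h2, h1⟩; exact Prod.ext h1 h2
    · intro h; exact ⟨congrArg Prod.snd h, congrArg Prod.fst h⟩
  rw [hset]
  have hcard : (((Finset.univ.filter fun i : Fin n =>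
        (x.sigma : Equiv.Perm (Pt n)) (1, i) = (-1, i) ∧ Odd (x.vec i)).card : ℕ) : ZMod 2)
      = ∑ i ∈ Finset.univ.filter
          (fun i : Fin n => (x.sigma : Equiv.Perm (Pt n)) (1, i) = (-1, i)),
          (if Odd (x.vec i) then (1 : ZMod 2) else 0) := by
    rw [← Finset.filter_filter, Finset.card_filter, Nat.cast_sum]
    exact Finset.sum_congr rfl (fun i _ => by split <;> simp)
  rw [hcard]
  exact Finset.sum_congr rfl (fun i _ => int_zmod2_ite _)

lemma g_spec (x : WC n) (hx2 : x * x = 1) (i : Fin n)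
    (hπ : ((x.sigma : Equiv.Perm (Pt n)) (1, i)).2 = i) :
    ∃ g : WC n, g * x = x * g ∧ sumV g = x.vec i ∧ minusCard g = 1 := by
  classical
  have hinj : ∀ j : Fin n, ((x.sigma : Equiv.Perm (Pt n)) (1, j)).2 = i → j = i :=
    fun j hj => pi_inj x (by rw [hj, hπ])
  refine ⟨mkW (negAt i) (negAt_mem i) (Pi.single i (x.vec i)), ?_, ?_, ?_⟩
  · refine WC.ext ?_ ?_
    · apply Subtype.ext
      show negAt i * (x.sigma : Equiv.Perm (Pt n)) = (x.sigma : Equiv.Perm (Pt n)) * negAt i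
      apply Equiv.ext
      rintro ⟨δ, k⟩
      rw [Equiv.Perm.mul_apply, Equiv.Perm.mul_apply]
      by_cases hk : k = i
      · subst hk
        have e1 : (negAt k) ((δ, k) : Pt n) = (-δ, k) := by
          simp [negAt, Function.Involutive.toPerm]
        have e2 : (negAt k) ((δ * ((x.sigma : Equiv.Perm (Pt n)) (1, k)).1,
            ((x.sigma : Equiv.Perm (Pt n)) (1, k)).2) : Pt n)
            = (-(δ * ((x.sigma : Equiv.Perm (Pt n)) (1, k)).1),
              ((x.sigma : Equiv.Perm (Pt n)) (1, k)).2) := by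
          simp [negAt, Function.Involutive.toPerm, hπ]
        rw [Hgrp_apply x.sigma.2 δ k, e2, e1, Hgrp_apply x.sigma.2 (-δ) k]
        exact Prod.ext (neg_mul δ _).symm rfl
      · have hπk : ((x.sigma : Equiv.Perm (Pt n)) (1, k)).2 ≠ i := fun h => hk (hinj k h)
        have e1 : (negAt i) ((δ, k) : Pt n) = (δ, k) := by
          simp [negAt, Function.Involutive.toPerm, hk]
        have e2 : (negAt i) ((δ * ((x.sigma : Equiv.Perm (Pt n)) (1, k)).1,
            ((x.sigma : Equiv.Perm (Pt n)) (1, k)).2) : Pt n)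
            = (δ * ((x.sigma : Equiv.Perm (Pt n)) (1, k)).1,
              ((x.sigma : Equiv.Perm (Pt n)) (1, k)).2) := by
          simp [negAt, Function.Involutive.toPerm, hπk]
        rw [Hgrp_apply x.sigma.2 δ k, e2, e1, Hgrp_apply x.sigma.2 δ k]
    · funext j
      show actV (x.sigma : Equiv.Perm (Pt n)) (Pi.single i (x.vec i)) j + x.vec j
          = actV (negAt i) x.vec j + (Pi.single i (x.vec i) : Fin n → ℤ) j
      unfold actV
      by_cases hj : j = i
      · subst hj
        have hv := vec_rel x hx2 j
        rw [hπ] at hv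
        have e1 : (negAt j) ((1, j) : Pt n) = (-1, j) := by simp [negAt, Function.Involutive.toPerm]
        rw [hπ, Pi.single_eq_same, e1, hv]
        simp
      · have hπj : ((x.sigma : Equiv.Perm (Pt n)) (1, j)).2 ≠ i := fun h => hj (hinj j h)
        have e1 : (negAt i) ((1, j) : Pt n) = (1, j) := by simp [negAt, Function.Involutive.toPerm, hj]
        rw [Pi.single_eq_of_ne hπj, Pi.single_eq_of_ne hj, e1]
        simp
  · show ∑ j, Pi.single i (x.vec i) j = x.vec i
    simp [Pi.single_apply]
  · show (Finset.univ.filter fun j : Fin n => ((negAt i) ((1, j) : Pt n)).1 = -1).card = 1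
    have hset : (Finset.univ.filter fun j : Fin n => ((negAt i) ((1, j) : Pt n)).1 = -1)
        = {i} := by
      ext j
      simp only [Finset.mem_filter, Finset.mem_univ, true_and, Finset.mem_singleton]
      by_cases hj : j = i
      · subst hj; simp [negAt, Function.Involutive.toPerm]
      · simp [negAt, Function.Involutive.toPerm, hj]
    rw [hset, Finset.card_singleton]

end AuxProof

theorem WD_conjugacy_classes (n : ℕ) (hn : 4 ≤ n) (x : WC n) (hx : x ∈ WD n)
    (h2 : orderOf x = 2) (m ke ko l : ℕ) (hl : lct x = (m, ke, ko, l)) :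
    Even ke ∧ Even ko ∧
    ((ke ≠ 0 ∨ ko ≠ 0 ∨ l ≠ 0) →
      (ConjugacyClassOf (WD n) x = ConjugacyClassOf (WB n) x ∨
       ConjugacyClassOf (WD n) x = ConjugacyClassOf (Bbar n) x)) := by
  classical
  have hx2 : x * x = 1 := by
    have h := pow_orderOf_eq_one x
    rwa [h2, pow_two] at h
  have hxWB : x ∈ WB n := (Subgroup.mem_inf.mp hx).1
  have hxBb : x ∈ Bbar n := (Subgroup.mem_inf.mp hx).2
  have hke : (Finset.univ.filter fun i : Fin n =>
      (x.sigma : Equiv.Perm (Pt n)) (1, i) = (-1, i) ∧ Even (x.vec i)).card = ke :=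
    congrArg (fun p : ℕ × ℕ × ℕ × ℕ => p.2.1) hl
  have hko : (Finset.univ.filter fun i : Fin n =>
      (x.sigma : Equiv.Perm (Pt n)) (1, i) = (-1, i) ∧ Odd (x.vec i)).card = ko :=
    congrArg (fun p : ℕ × ℕ × ℕ × ℕ => p.2.2.1) hl
  have hlfix : (Finset.univ.filter fun i : Fin n =>
      (x.sigma : Equiv.Perm (Pt n)) (1, i) = (1, i)).card = l :=
    congrArg (fun p : ℕ × ℕ × ℕ × ℕ => p.2.2.2) hl
  have hpsi : ((sumV x : ℤ) : ZMod 2) = 0 := (mem_WB_iff x).mp hxWB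
  have hphi : ((sumV x : ℤ) : ZMod 2) + ((minusCard x : ℕ) : ZMod 2) = 0 :=
    (mem_Bbar_iff x).mp hxBb
  have hBko : ((ko : ℕ) : ZMod 2) = 0 := by
    have hB := claimB x hx2
    rw [hko] at hB
    rw [← hB]; exact hpsi
  have hminus : ((minusCard x : ℕ) : ZMod 2) = 0 := by
    rw [hpsi, zero_add] at hphi; exact hphi
  have hBke : ((ke : ℕ) : ZMod 2) = 0 := by
    have hA := claimA x hx2
    rw [hke, hko, hminus, hBko, add_zero] at hA
    exact hA.symm
  refine ⟨nat_even_zmod2 hBke, nat_even_zmod2 hBko, ?_⟩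
  intro hcase
  have goleft : ∀ i : Fin n, ((x.sigma : Equiv.Perm (Pt n)) (1, i)).2 = i →
      Even (x.vec i) →
      ConjugacyClassOf (WD n) x = ConjugacyClassOf (WB n) x := by
    intro i hπ hev
    obtain ⟨g, hgc, hgs, hgm⟩ := g_spec x hx2 i hπ
    have hψg : ((sumV g : ℤ) : ZMod 2) = 0 := by
      rw [hgs]; exact even_int_iff_zmod.mp hev
    have hφg : phiHom n g = 1 := by
      unfold phiHom
      rw [hgm, hgs, even_int_iff_zmod.mp hev, zero_add, Nat.cast_one]
    exact class_eq_of_comm (WB n) (WD n) (phiHom n) phiHom_mul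
      (fun w => (mem_WD_iff w).trans (and_congr_right fun _ => mem_Bbar_iff w))
      x g hgc ((mem_WB_iff g).mpr hψg) hφg
  rcases hcase with hne | hne | hne
  · left
    obtain ⟨i, hi⟩ := Finset.card_ne_zero.mp (by rw [hke]; exact hne)
    rcases Finset.mem_filter.mp hi with ⟨-, hsi, hev⟩
    exact goleft i (by rw [hsi]) hev
  · right
    obtain ⟨i, hi⟩ := Finset.card_ne_zero.mp (by rw [hko]; exact hne)
    rcases Finset.mem_filter.mp hi with ⟨-, hsi, hodd⟩
    have hπ : ((x.sigma : Equiv.Perm (Pt n)) (1, i)).2 = i := by rw [hsi]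
    obtain ⟨g, hgc, hgs, hgm⟩ := g_spec x hx2 i hπ
    have hψg : psiHom n g = 1 := by
      unfold psiHom
      rw [hgs]; exact odd_int_zmod hodd
    have hφg : phiHom n g = 0 := by
      unfold phiHom
      rw [hgm, hgs, odd_int_zmod hodd, Nat.cast_one]
      decide
    exact class_eq_of_comm (Bbar n) (WD n) (psiHom n) psiHom_mul
      (fun w => (mem_WD_iff w).trans
        ⟨fun ⟨a, b⟩ => ⟨b, (mem_WB_iff w).mp a⟩,
         fun ⟨b, a⟩ => ⟨(mem_WB_iff w).mpr a, b⟩⟩)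
      x g hgc ((mem_Bbar_iff g).mpr hφg) hψg
  · left
    obtain ⟨i, hi⟩ := Finset.card_ne_zero.mp (by rw [hlfix]; exact hne)
    rcases Finset.mem_filter.mp hi with ⟨-, hsi⟩
    refine goleft i (by rw [hsi]) ?_
    rw [fixed_vec_zero x hx2 i hsi]
    exact Even.zero
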